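/- Let G be a group, {z_i}_{i∈I} elements of G, and {H_i}_{i∈I} subgroups with H_i contained in the centralizer of z_i. Then the disjoint union ⊔_{i∈I} (H_i\G) with operation H_i x * H_j y = H_i z_i⁻¹ x y⁻¹ z_j y is a quandle. -/
import Mathlib


open Quandles

section Aux

variable {G : Type*} [Group G] {I : Type*} (z : I → G) (H : I → Subgroup G)
  (hH : ∀ i, H i ≤ Subgroup.centralizer {z i})

include hH

private lemma conj_eq {j : I} {y y' : G} (hy : y' * y⁻¹ ∈ H j) :
    y⁻¹ * z j * y = y'⁻¹ * z j * y' := by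
  have c : z j * (y' * y⁻¹) = (y' * y⁻¹) * z j :=
    Subgroup.mem_centralizer_iff.mp (hH j hy) (z j) rfl
  have : y'⁻¹ * z j * y' = y⁻¹ * z j * y := by
    calc y'⁻¹ * z j * y' = y'⁻¹ * (z j * (y' * y⁻¹)) * y := by group
      _ = y'⁻¹ * ((y' * y⁻¹) * z j) * y := by rw [c]
      _ = y⁻¹ * z j * y := by group
  exact this.symm

private lemma qrespect {i j : I} {x x' y y' : G} (hx : x' * x⁻¹ ∈ H i)
    (hy : y' * y⁻¹ ∈ H j) :
    ((z i)⁻¹ * x' * y'⁻¹ * z j * y') * ((z i)⁻¹ * x * y⁻¹ * z j * y)⁻¹ ∈ H i := by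
  have e1 := conj_eq z H hH hy
  have c2 : z i * (x' * x⁻¹) = (x' * x⁻¹) * z i :=
    Subgroup.mem_centralizer_iff.mp (hH i hx) (z i) rfl
  have key : ((z i)⁻¹ * x' * y'⁻¹ * z j * y') * ((z i)⁻¹ * x * y⁻¹ * z j * y)⁻¹
      = x' * x⁻¹ := by
    calc ((z i)⁻¹ * x' * y'⁻¹ * z j * y') * ((z i)⁻¹ * x * y⁻¹ * z j * y)⁻¹
        = (z i)⁻¹ * x' * (y'⁻¹ * z j * y') * (y⁻¹ * z j * y)⁻¹ * x⁻¹ * z i := by group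
      _ = (z i)⁻¹ * x' * (y⁻¹ * z j * y) * (y⁻¹ * z j * y)⁻¹ * x⁻¹ * z i := by rw [← e1]
      _ = (z i)⁻¹ * ((x' * x⁻¹) * z i) := by group
      _ = (z i)⁻¹ * (z i * (x' * x⁻¹)) := by rw [c2]
      _ = x' * x⁻¹ := by group
  rw [key]; exact hx

private lemma qrespect' {i j : I} {x x' y y' : G} (hx : x' * x⁻¹ ∈ H i)
    (hy : y' * y⁻¹ ∈ H j) :
    (z i * x' * (y'⁻¹ * z j * y')⁻¹) * (z i * x * (y⁻¹ * z j * y)⁻¹)⁻¹ ∈ H i := by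
  have e1 := conj_eq z H hH hy
  have c2 : z i * (x' * x⁻¹) = (x' * x⁻¹) * z i :=
    Subgroup.mem_centralizer_iff.mp (hH i hx) (z i) rfl
  have key : (z i * x' * (y'⁻¹ * z j * y')⁻¹) * (z i * x * (y⁻¹ * z j * y)⁻¹)⁻¹
      = x' * x⁻¹ := by
    calc (z i * x' * (y'⁻¹ * z j * y')⁻¹) * (z i * x * (y⁻¹ * z j * y)⁻¹)⁻¹
        = z i * x' * (y'⁻¹ * z j * y')⁻¹ * (y⁻¹ * z j * y) * x⁻¹ * (z i)⁻¹ := by group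
      _ = z i * x' * (y⁻¹ * z j * y)⁻¹ * (y⁻¹ * z j * y) * x⁻¹ * (z i)⁻¹ := by rw [← e1]
      _ = (z i * (x' * x⁻¹)) * (z i)⁻¹ := by group
      _ = ((x' * x⁻¹) * z i) * (z i)⁻¹ := by rw [c2]
      _ = x' * x⁻¹ := by group
  rw [key]; exact hx

private def qact :
    (Σ i : I, Quotient (QuotientGroup.rightRel (H i))) →
    (Σ i : I, Quotient (QuotientGroup.rightRel (H i))) →
    (Σ i : I, Quotient (QuotientGroup.rightRel (H i)))
  | ⟨j, qy⟩, ⟨i, qx⟩ =>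
    ⟨i, Quotient.map₂ (fun y x => (z i)⁻¹ * x * y⁻¹ * z j * y)
      (fun _ _ hy _ _ hx =>
        QuotientGroup.rightRel_apply.mpr
          (qrespect z H hH (QuotientGroup.rightRel_apply.mp hx)
            (QuotientGroup.rightRel_apply.mp hy))) qy qx⟩

private def qinv :
    (Σ i : I, Quotient (QuotientGroup.rightRel (H i))) →
    (Σ i : I, Quotient (QuotientGroup.rightRel (H i))) →
    (Σ i : I, Quotient (QuotientGroup.rightRel (H i)))
  | ⟨j, qy⟩, ⟨i, qx⟩ =>
    ⟨i, Quotient.map₂ (fun y x => z i * x * (y⁻¹ * z j * y)⁻¹)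
      (fun _ _ hy _ _ hx =>
        QuotientGroup.rightRel_apply.mpr
          (qrespect' z H hH (QuotientGroup.rightRel_apply.mp hx)
            (QuotientGroup.rightRel_apply.mp hy))) qy qx⟩

private lemma qact_mk (i j : I) (x y : G) :
    qact z H hH ⟨j, Quotient.mk (QuotientGroup.rightRel (H j)) y⟩
        ⟨i, Quotient.mk (QuotientGroup.rightRel (H i)) x⟩ =
      ⟨i, Quotient.mk (QuotientGroup.rightRel (H i))
        ((z i)⁻¹ * x * y⁻¹ * z j * y)⟩ := rfl

private lemma qinv_mk (i j : I) (x y : G) :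
    qinv z H hH ⟨j, Quotient.mk (QuotientGroup.rightRel (H j)) y⟩
        ⟨i, Quotient.mk (QuotientGroup.rightRel (H i)) x⟩ =
      ⟨i, Quotient.mk (QuotientGroup.rightRel (H i))
        (z i * x * (y⁻¹ * z j * y)⁻¹)⟩ := rfl

private def qdl : Quandle (Σ i : I, Quotient (QuotientGroup.rightRel (H i))) where
  act := qact z H hH
  self_distrib := by
    intro a b c
    obtain ⟨i, x⟩ := a
    obtain ⟨j, y⟩ := b
    obtain ⟨k, u⟩ := c
    obtain ⟨x, rfl⟩ := Quotient.exists_rep x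
    obtain ⟨y, rfl⟩ := Quotient.exists_rep y
    obtain ⟨u, rfl⟩ := Quotient.exists_rep u
    simp only [qact_mk]
    have : (z k)⁻¹ * ((z k)⁻¹ * u * y⁻¹ * z j * y) * x⁻¹ * z i * x =
        (z k)⁻¹ * ((z k)⁻¹ * u * x⁻¹ * z i * x) *
          ((z j)⁻¹ * y * x⁻¹ * z i * x)⁻¹ * z j * ((z j)⁻¹ * y * x⁻¹ * z i * x) := by
      group
    rw [this]
  invAct := qinv z H hH
  left_inv := by
    intro a b
    obtain ⟨j, y⟩ := a
    obtain ⟨i, x⟩ := b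
    obtain ⟨y, rfl⟩ := Quotient.exists_rep y
    obtain ⟨x, rfl⟩ := Quotient.exists_rep x
    simp only [qact_mk, qinv_mk]
    have : z i * ((z i)⁻¹ * x * y⁻¹ * z j * y) * (y⁻¹ * z j * y)⁻¹ = x := by group
    rw [this]
  right_inv := by
    intro a b
    obtain ⟨j, y⟩ := a
    obtain ⟨i, x⟩ := b
    obtain ⟨y, rfl⟩ := Quotient.exists_rep y
    obtain ⟨x, rfl⟩ := Quotient.exists_rep x
    simp only [qact_mk, qinv_mk]
    have : (z i)⁻¹ * (z i * x * (y⁻¹ * z j * y)⁻¹) * y⁻¹ * z j * y = x := by group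
    rw [this]
  fix := by
    intro a
    obtain ⟨i, x⟩ := a
    obtain ⟨x, rfl⟩ := Quotient.exists_rep x
    simp only [qact_mk]
    have : (z i)⁻¹ * x * x⁻¹ * z i * x = x := by group
    rw [this]

end Aux

/-- Let `G` be a group, `{z i}_{i ∈ I}` elements of `G` and `{H i}_{i ∈ I}`
subgroups with `H i` contained in the centralizer of `z i`.  Then the disjoint
union `⊔_{i ∈ I} (H i)\G` of the sets of right cosets carries a quandle
structure with `H_i x * H_j y = H_i (z i)⁻¹ x y⁻¹ (z j) y`; in Mathlib's
left-action convention the paper's `a * b` is `b ◃ a`. -/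
theorem stmt4 (G : Type*) [Group G] (I : Type*) (z : I → G) (H : I → Subgroup G)
    (hH : ∀ i, H i ≤ Subgroup.centralizer {z i}) :
    ∃ q : Quandle (Σ i : I, Quotient (QuotientGroup.rightRel (H i))),
      ∀ (i j : I) (x y : G),
        q.act (⟨j, Quotient.mk (QuotientGroup.rightRel (H j)) y⟩ :
            Σ i : I, Quotient (QuotientGroup.rightRel (H i)))
          ⟨i, Quotient.mk (QuotientGroup.rightRel (H i)) x⟩ =
          ⟨i, Quotient.mk (QuotientGroup.rightRel (H i))
            ((z i)⁻¹ * x * y⁻¹ * z j * y)⟩ := by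
  exact ⟨qdl z H hH, fun i j x y => qact_mk z H hH i j x y⟩
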